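/- Let G=(V,E,w) be a connected weighted undirected graph with Laplacian matrix L. Then the Kemeny constant satisfies K = Σ_{j=1}^n d_j · (e_j − π)^T L† (e_j − π), where L† is the Moore–Penrose pseudoinverse of L and e_j is the j-th standard basis vector. -/

import Mathlib

open Matrix BigOperators Finset

/-- For a connected weighted undirected graph with Laplacian `L = D - A`, the Kemeny
constant satisfies `K = Σ_j d_j · (e_j − π)ᵀ L† (e_j − π)`, where `L†` is the Moore–Penrose
pseudoinverse of `L` (characterized by the four Penrose conditions) and `e_j` is the `j`-th
standard basis vector.  Hitting times `H i j` are characterized by their first-step recurrence,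
and `K = Σ_j π_j H_{ij}` (independent of `i`). -/
theorem kemeny_eq_sum_quadratic_forms
    (n : ℕ) (hn : 0 < n)
    (A : Matrix (Fin n) (Fin n) ℝ)
    (hsym : A.IsSymm)
    (hnonneg : ∀ i j, 0 ≤ A i j)
    (hloop : ∀ i, A i i = 0)
    (hconn : ∀ i j : Fin n, ∃ k : ℕ, (A ^ k) i j ≠ 0)
    (deg : Fin n → ℝ) (hdeg : ∀ i, deg i = ∑ j, A i j)
    (d : ℝ) (hd : d = ∑ i, deg i)
    (pi' : Fin n → ℝ) (hpi : ∀ i, pi' i = deg i / d)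
    (L : Matrix (Fin n) (Fin n) ℝ) (hL : L = Matrix.diagonal deg - A)
    (Ldag : Matrix (Fin n) (Fin n) ℝ)
    (hMP1 : L * Ldag * L = L)
    (hMP2 : Ldag * L * Ldag = Ldag)
    (hMP3 : (L * Ldag)ᵀ = L * Ldag)
    (hMP4 : (Ldag * L)ᵀ = Ldag * L)
    (H : Fin n → Fin n → ℝ)
    (hHdiag : ∀ j, H j j = 0)
    (hHrec : ∀ i j, i ≠ j → H i j = 1 + ∑ k, (A i k / deg i) * H k j)
    (K : ℝ) (hK : ∀ i, K = ∑ j, pi' j * H i j) :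
    K = ∑ j, deg j * ((Pi.single j 1 - pi') ⬝ᵥ (Ldag *ᵥ (Pi.single j 1 - pi'))) := by
  classical
  have hdegnn : ∀ i, 0 ≤ deg i := fun i => by
    rw [hdeg]; exact Finset.sum_nonneg fun j _ => hnonneg i j
  by_cases hd0 : d = 0
  · -- degenerate case: all degrees are zero
    have hall : ∀ i, deg i = 0 := by
      intro i
      have h := (Finset.sum_eq_zero_iff_of_nonneg (fun i _ => hdegnn i)).mp
        (by rw [← hd, hd0])
      exact h i (Finset.mem_univ i)
    have hpi0 : ∀ i, pi' i = 0 := fun i => by rw [hpi, hall, zero_div]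
    have hK0 : K = 0 := by
      rw [hK ⟨0, hn⟩]
      exact Finset.sum_eq_zero fun j _ => by rw [hpi0, zero_mul]
    rw [hK0]
    exact (Finset.sum_eq_zero fun j _ => by rw [hall, zero_mul]).symm
  · have hAz : ∀ i, deg i = 0 → ∀ k, A i k = 0 := by
      intro i h0 k
      have h := (Finset.sum_eq_zero_iff_of_nonneg (fun k _ => hnonneg i k)).mp
        (by rw [← hdeg, h0])
      exact h k (Finset.mem_univ k)
    have hLsym : Lᵀ = L := by
      rw [hL, Matrix.transpose_sub, Matrix.diagonal_transpose, hsym]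
    have hLs : ∀ i k, L i k = L k i := by
      intro i k
      rw [← Matrix.transpose_apply L k i, hLsym]
    have hLrow : ∀ i, ∑ k, L i k = 0 := by
      intro i
      simp only [hL, Matrix.sub_apply, Finset.sum_sub_distrib]
      have h1 : ∑ k, Matrix.diagonal deg i k = deg i := by
        simp [Matrix.diagonal_apply]
      rw [h1, ← hdeg, sub_self]
    have hLcol : ∀ k, ∑ i, L i k = 0 := by
      intro k
      calc ∑ i, L i k = ∑ i, L k i := Finset.sum_congr rfl fun i _ => hLs i k
        _ = 0 := hLrow k
    -- Key: (L h_j)_i = deg i - d·δ_{ij}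
    have hLH : ∀ j i, (L *ᵥ fun k => H k j) i = deg i - d * (if i = j then 1 else 0) := by
      intro j
      have expand : ∀ i, (L *ᵥ fun k => H k j) i = deg i * H i j - ∑ k, A i k * H k j := by
        intro i
        simp only [Matrix.mulVec, dotProduct, hL, Matrix.sub_apply, sub_mul,
          Finset.sum_sub_distrib]
        congr 1
        simp [Matrix.diagonal_apply, Finset.sum_ite_eq]
      have hne : ∀ i, i ≠ j → (L *ᵥ fun k => H k j) i = deg i := by
        intro i hij
        rw [expand i]
        have step : deg i * H i j = deg i + ∑ k, A i k * H k j := by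
          by_cases h0 : deg i = 0
          · simp [h0, hAz i h0]
          · rw [hHrec i j hij, mul_add, mul_one, Finset.mul_sum]
            congr 1
            refine Finset.sum_congr rfl fun k _ => ?_
            field_simp
        rw [step]; ring
      have hsum0 : ∑ i, (L *ᵥ fun k => H k j) i = 0 := by
        simp only [Matrix.mulVec, dotProduct]
        rw [Finset.sum_comm]
        refine Finset.sum_eq_zero fun k _ => ?_
        rw [← Finset.sum_mul, hLcol, zero_mul]
      have hatj : (L *ᵥ fun k => H k j) j = deg j - d := by
        have h1 : (L *ᵥ fun k => H k j) j
            + ∑ i ∈ Finset.univ.erase j, (L *ᵥ fun k => H k j) i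
            = ∑ i, (L *ᵥ fun k => H k j) i :=
          Finset.add_sum_erase _ _ (Finset.mem_univ j)
        have h2 : ∑ i ∈ Finset.univ.erase j, (L *ᵥ fun k => H k j) i
            = ∑ i ∈ Finset.univ.erase j, deg i :=
          Finset.sum_congr rfl fun i hi => hne i (Finset.mem_erase.mp hi).1
        have h3 : ∑ i ∈ Finset.univ.erase j, deg i = d - deg j := by
          rw [Finset.sum_erase_eq_sub (Finset.mem_univ j), ← hd]
        rw [hsum0, h2, h3] at h1
        linarith
      intro i
      by_cases h : i = j
      · subst h; rw [hatj]; simp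
      · rw [hne i h]; simp [h]
    have hdne : d ≠ 0 := hd0
    -- the shifted basis vector is a multiple of L h_j
    have hxe : ∀ j, (Pi.single j 1 - pi' : Fin n → ℝ)
        = (-(1/d)) • (L *ᵥ fun k => H k j) := by
      intro j
      funext i
      simp only [Pi.sub_apply, Pi.smul_apply, smul_eq_mul, hLH j i, Pi.single_apply, hpi]
      field_simp
      ring
    -- quadratic form evaluation
    have hq : ∀ j, (Pi.single j 1 - pi') ⬝ᵥ (Ldag *ᵥ (Pi.single j 1 - pi'))
        = (1/d^2) * ∑ i, deg i * H i j := by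
      intro j
      rw [hxe j]
      rw [Matrix.mulVec_smul, smul_dotProduct, dotProduct_smul]
      have hsymdot : ∀ u v : Fin n → ℝ, (L *ᵥ u) ⬝ᵥ v = u ⬝ᵥ (L *ᵥ v) := by
        intro u v
        rw [Matrix.dotProduct_mulVec, ← Matrix.mulVec_transpose, hLsym]
      have hcollapse : (L *ᵥ fun k => H k j) ⬝ᵥ (Ldag *ᵥ (L *ᵥ fun k => H k j))
          = (fun k => H k j) ⬝ᵥ (L *ᵥ fun k => H k j) := by
        rw [hsymdot, Matrix.mulVec_mulVec, Matrix.mulVec_mulVec, hMP1]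
      rw [hcollapse]
      have hform : (fun k => H k j) ⬝ᵥ (L *ᵥ fun k => H k j) = ∑ i, deg i * H i j := by
        simp only [dotProduct]
        calc ∑ i, H i j * (L *ᵥ fun k => H k j) i
            = ∑ i, (deg i * H i j - d * (if i = j then H i j else 0)) := by
              refine Finset.sum_congr rfl fun i _ => ?_
              rw [hLH j i]
              by_cases h : i = j
              · subst h
                rw [if_pos rfl, if_pos rfl]
                ring
              · rw [if_neg h, if_neg h]
                ring
          _ = (∑ i, deg i * H i j) - d * ∑ i, (if i = j then H i j else 0) := by
              rw [Finset.sum_sub_distrib, Finset.mul_sum]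
          _ = ∑ i, deg i * H i j := by
              rw [Finset.sum_ite_eq' Finset.univ j (fun i => H i j)]
              simp [hHdiag j]
      rw [hform]
      rw [smul_eq_mul, smul_eq_mul]
      ring
    have hdK : ∀ i, ∑ j, deg j * H i j = d * K := by
      intro i
      rw [hK i, Finset.mul_sum]
      refine Finset.sum_congr rfl fun j _ => ?_
      rw [hpi]
      field_simp
    calc K = (∑ i, deg i) * (1/d^2 * (d * K)) := by
          rw [← hd]
          field_simp
      _ = ∑ i, deg i * (1/d^2 * (d * K)) := by rw [Finset.sum_mul]
      _ = ∑ i, ∑ j, deg j * (1/d^2 * (deg i * H i j)) := by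
          refine Finset.sum_congr rfl fun i _ => ?_
          rw [← hdK i, Finset.mul_sum, Finset.mul_sum]
          refine Finset.sum_congr rfl fun j _ => by ring
      _ = ∑ j, ∑ i, deg j * (1/d^2 * (deg i * H i j)) := Finset.sum_comm
      _ = ∑ j, deg j * ((1/d^2) * ∑ i, deg i * H i j) := by
          refine Finset.sum_congr rfl fun j _ => ?_
          rw [Finset.mul_sum, Finset.mul_sum]
      _ = ∑ j, deg j * ((Pi.single j 1 - pi') ⬝ᵥ (Ldag *ᵥ (Pi.single j 1 - pi'))) := by
          refine Finset.sum_congr rfl fun j _ => ?_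
          rw [hq j]
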